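/- Define f(n,k) = Σ_{j∈ℤ} (−1)^j q^{j(3j−1)/2} [n choose k−j]_q [n choose k+j]_q. Then for all n ≥ 2 and all k, f(n,k) − (1 + q − q^n) f(n−1,k) − q^{2n−2k} f(n−1,k−1) + q(1 − q^{n−1}) f(n−2,k) = 0. -/

import Mathlib

open LaurentPolynomial

/-- The Gaussian (q-)binomial coefficient `[n choose k]_q`, as a Laurent polynomial in `q`,
with the convention that it vanishes for `k < 0` or `k > n`.  Defined via the standard
Pascal-type recurrence `[n+1, k] = q^k [n, k] + [n, k-1]`. -/
noncomputable def qb : ℕ → ℤ → LaurentPolynomial ℤ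
  | 0, k => if k = 0 then 1 else 0
  | (n+1), k => T k * qb n k + qb n (k-1)

/-- The variable `q`. -/
noncomputable def q : LaurentPolynomial ℤ := T 1

/-- `f n k = Σ_{j∈ℤ} (−1)^j q^{j(3j−1)/2} [n choose k−j]_q [n choose k+j]_q`. -/
noncomputable def f (n : ℕ) (k : ℤ) : LaurentPolynomial ℤ :=
  ∑ᶠ j : ℤ, (-1 : LaurentPolynomial ℤ) ^ j.natAbs * T (j * (3 * j - 1) / 2) *
    qb n (k - j) * qb n (k + j)

abbrev L := LaurentPolynomial ℤ

noncomputable def cc (j : ℤ) : L := (-1) ^ j.natAbs * T (j * (3 * j - 1) / 2)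

lemma f_eq (n : ℕ) (k : ℤ) : f n k = ∑ᶠ j : ℤ, cc j * qb n (k - j) * qb n (k + j) := rfl

lemma qb_zero (k : ℤ) : qb 0 k = if k = 0 then 1 else 0 := rfl

lemma qb_succ (n : ℕ) (k : ℤ) : qb (n+1) k = T k * qb n k + qb n (k-1) := rfl

lemma T_mul (a b c : ℤ) (h : a + b = c) : (T a : L) * T b = T c := by rw [← T_add, h]

lemma T_mul_one (a b : ℤ) (h : a + b = 0) : (T a : L) * T b = 1 := by
  rw [← T_add, h, T_zero]

lemma qb_neg : ∀ (n : ℕ) (k : ℤ), k < 0 → qb n k = 0 := by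
  intro n
  induction n with
  | zero => intro k hk; rw [qb_zero, if_neg (by omega)]
  | succ n ih =>
    intro k hk
    rw [qb_succ, ih k hk, ih (k-1) (by omega), mul_zero, add_zero]

lemma qb_gt : ∀ (n : ℕ) (k : ℤ), (n : ℤ) < k → qb n k = 0 := by
  intro n
  induction n with
  | zero => intro k hk; rw [qb_zero, if_neg (by omega)]
  | succ n ih =>
    intro k hk
    rw [qb_succ, ih k (by push_cast at hk ⊢; omega), ih (k-1) (by push_cast at hk ⊢; omega),
      mul_zero, add_zero]

lemma pascal2 : ∀ (n : ℕ) (k : ℤ), qb (n+1) k = qb n k + T ((n : ℤ) + 1 - k) * qb n (k-1) := by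
  intro n
  induction n with
  | zero =>
    intro k
    rw [qb_succ]
    by_cases h0 : k = 0
    · subst h0; norm_num [qb_zero]
    by_cases h1 : k = 1
    · subst h1; norm_num [qb_zero]
    · rw [qb_zero, qb_zero, if_neg h0, if_neg (by omega), mul_zero, mul_zero, zero_add]
  | succ n ih =>
    intro k
    have h1 : qb (n+1+1) k = T k * qb (n+1) k + qb (n+1) (k-1) := qb_succ _ _
    have h2 : qb (n+1) k = T k * qb n k + qb n (k-1) := qb_succ _ _
    have h3 : qb (n+1) (k-1) = T (k-1) * qb n (k-1) + qb n (k-1-1) := qb_succ _ _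
    have h4 : qb (n+1) k = qb n k + T ((n:ℤ) + 1 - k) * qb n (k-1) := ih k
    have h5 : qb (n+1) (k-1) = qb n (k-1) + T ((n:ℤ) + 1 + 1 - k) * qb n (k-1-1) := by
      have := ih (k-1)
      rw [show (n:ℤ) + 1 - (k-1) = (n:ℤ) + 1 + 1 - k by ring] at this
      exact this
    have e1 : (T k : L) * T ((n:ℤ) + 1 - k) = T ((n:ℤ)+1) := T_mul _ _ _ (by ring)
    have e2 : (T ((n:ℤ) + 1 + 1 - k) : L) * T (k-1) = T ((n:ℤ)+1) := T_mul _ _ _ (by ring)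
    push_cast
    rw [h1]
    -- goal: T k * qb (n+1) k + qb (n+1) (k-1) = qb (n+1) k + T (n+1+1-k) * qb (n+1) (k-1)
    linear_combination (T k : L) * h4 - h2 + h5 - (T ((n:ℤ)+1+1-k) : L) * h3 +
      qb n (k-1) * e1 - qb n (k-1) * e2
lemma no_two_torsion (x : L) (h : x + x = 0) : x = 0 := by
  ext a
  have h3 := congrArg (fun y : L => y.coeff a) h
  rw [AddMonoidAlgebra.coeff_add, Finsupp.add_apply] at h3
  simp only [AddMonoidAlgebra.coeff_zero, Finsupp.coe_zero, Pi.zero_apply] at h3 ⊢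
  omega

lemma two_dvd_e (j : ℤ) : 2 ∣ j * (3 * j - 1) := by
  rcases Int.even_or_odd j with ⟨m, hm⟩ | ⟨m, hm⟩
  · exact ⟨m * (3 * j - 1), by rw [hm]; ring⟩
  · exact ⟨j * (3 * m + 1), by rw [hm]; ring⟩

lemma exp_neg (j : ℤ) : (-j) * (3 * (-j) - 1) / 2 = j * (3 * j - 1) / 2 + j := by
  obtain ⟨d, hd⟩ := two_dvd_e j
  have h2 : (-j) * (3 * (-j) - 1) = j * (3 * j - 1) + 2 * j := by ring
  rw [hd] at h2 ⊢
  rw [h2]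
  omega

lemma exp_one_sub (j : ℤ) : (1-j) * (3 * (1-j) - 1) / 2 = j * (3 * j - 1) / 2 + (1 - 2 * j) := by
  obtain ⟨d, hd⟩ := two_dvd_e j
  have h2 : (1-j) * (3 * (1-j) - 1) = j * (3 * j - 1) + 2 * (1 - 2 * j) := by ring
  rw [hd] at h2 ⊢
  rw [h2]
  omega

lemma signNeg (j : ℤ) : ((-1 : L)) ^ (-j).natAbs = (-1) ^ j.natAbs := by
  rw [Int.natAbs_neg]

lemma signOneSub (j : ℤ) : ((-1 : L)) ^ (1-j).natAbs = -((-1) ^ j.natAbs) := by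
  rcases Int.even_or_odd j with h | h
  · rw [(Int.natAbs_even.mpr h).neg_one_pow,
      (Int.natAbs_odd.mpr (Odd.sub_even odd_one h)).neg_one_pow]
  · rw [(Int.natAbs_odd.mpr h).neg_one_pow,
      (Int.natAbs_even.mpr (Odd.sub_odd odd_one h)).neg_one_pow, neg_neg]

lemma cc_neg (j : ℤ) : cc (-j) = cc j * T j := by
  unfold cc
  rw [signNeg, exp_neg, T_add, ← mul_assoc]

lemma cc_one_sub (j : ℤ) : cc (1-j) = -(cc j * T (1 - 2*j)) := by
  unfold cc
  rw [signOneSub, exp_one_sub, T_add, neg_mul]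
  ring

lemma fin_of_bounds {F : ℤ → L} (lo hi : ℤ) (h : ∀ j, F j ≠ 0 → lo ≤ j ∧ j ≤ hi) :
    (Function.support F).Finite :=
  Set.Finite.subset (Set.finite_Icc lo hi) (fun j hj => Set.mem_Icc.mpr (h j hj))

lemma fin_right (n : ℕ) (g : ℤ → L) (m : ℤ) :
    (Function.support fun j => g j * qb n (m + j)).Finite := by
  apply fin_of_bounds (-m) ((n : ℤ) - m)
  intro j hj
  constructor
  · by_contra h
    exact hj (by rw [qb_neg n _ (by omega), mul_zero])
  · by_contra h
    exact hj (by rw [qb_gt n _ (by omega), mul_zero])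

lemma fin_const_mul (c : L) {F : ℤ → L} (h : (Function.support F).Finite) :
    (Function.support fun j => c * F j).Finite := by
  apply h.subset
  intro j hj
  simp only [Function.mem_support] at hj ⊢
  exact fun h0 => hj (by rw [h0, mul_zero])

lemma qbc (n : ℕ) {a b : ℤ} (h : a = b) : qb n a = qb n b := by rw [h]

lemma Sneg (n : ℕ) (k : ℤ) :
    ∑ᶠ j : ℤ, cc j * T (-j) * qb n (k - j) * qb n (k - 1 + j) = 0 := by
  set F := fun j : ℤ => cc j * T (-j) * qb n (k - j) * qb n (k - 1 + j) with hF
  have key : ∀ j, F (1 - j) = -F j := by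
    intro j
    show cc (1-j) * T (-(1-j)) * qb n (k - (1-j)) * qb n (k - 1 + (1-j)) = _
    rw [cc_one_sub, qbc n (show k - (1-j) = k - 1 + j by ring),
      qbc n (show k - 1 + (1-j) = k - j by ring)]
    have e : (T (1 - 2*j) : L) * T (-(1-j)) = T (-j) := T_mul _ _ _ (by ring)
    linear_combination (-(cc j) * qb n (k-1+j) * qb n (k-j)) * e
  have hcomp : ∑ᶠ j : ℤ, F ((Equiv.subLeft (1:ℤ)) j) = ∑ᶠ j : ℤ, F j :=
    finsum_comp_equiv (Equiv.subLeft (1:ℤ))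
  have h1 : ∑ᶠ j : ℤ, F ((Equiv.subLeft (1:ℤ)) j) = -∑ᶠ j : ℤ, F j := by
    calc ∑ᶠ j : ℤ, F ((Equiv.subLeft (1:ℤ)) j) = ∑ᶠ j : ℤ, -F j :=
          finsum_congr (fun j => by rw [Equiv.subLeft_apply]; exact key j)
      _ = -∑ᶠ j : ℤ, F j := finsum_neg_distrib F
  have h2 : (∑ᶠ j : ℤ, F j) + (∑ᶠ j : ℤ, F j) = 0 := by
    nth_rewrite 1 [← hcomp]
    rw [h1]; ring
  exact no_two_torsion _ h2
noncomputable def Sf (n : ℕ) (k : ℤ) : L :=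
  ∑ᶠ j : ℤ, cc j * qb n (k - j) * qb n (k - 1 + j)

lemma Tc {a b : ℤ} (h : a = b) : (T a : L) = T b := by rw [h]

lemma reindex_neg (F : ℤ → L) : ∑ᶠ j : ℤ, F j = ∑ᶠ j : ℤ, F (-j) :=
  ((finsum_comp_equiv (Equiv.neg ℤ) (f := F)).symm).trans
    (finsum_congr fun j => by rw [Equiv.neg_apply])

lemma fin_add {F G : ℤ → L} (hF : (Function.support F).Finite)
    (hG : (Function.support G).Finite) :
    (Function.support fun j => F j + G j).Finite :=
  (hF.union hG).subset (Function.support_add F G)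

lemma expand1 (n : ℕ) (k : ℤ) :
    f (n+1) k = T (2*k) * f n k + T k * Sf n k + f n (k-1) := by
  have step : ∀ j : ℤ, cc j * qb (n+1) (k - j) * qb (n+1) (k + j)
      = T (2*k) * (cc j * qb n (k - j) * qb n (k + j))
      + (T k * (cc j * T (-j) * qb n (k - j) * qb n (k - 1 + j))
      + ((cc j * T (k + j) * qb n (k - 1 - j)) * qb n (k + j)
      + cc j * qb n (k - 1 - j) * qb n (k - 1 + j))) := by
    intro j
    rw [qb_succ n (k-j), qb_succ n (k+j),
      show qb n (k+j-1) = qb n (k-1+j) from qbc n (by ring),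
      show qb n (k-j-1) = qb n (k-1-j) from qbc n (by ring)]
    have e1 : (T (k-j) : L) * T (k+j) = T (2*k) := T_mul _ _ _ (by ring)
    have e2 : (T k : L) * T (-j) = T (k-j) := T_mul _ _ _ (by ring)
    linear_combination (cc j * qb n (k-j) * qb n (k+j)) * e1
      - (cc j * qb n (k-j) * qb n (k-1+j)) * e2
  have ht1 : (Function.support fun j : ℤ =>
      T (2*k) * (cc j * qb n (k - j) * qb n (k + j))).Finite :=
    fin_const_mul _ (fin_right n (fun j => cc j * qb n (k - j)) k)
  have ht2 : (Function.support fun j : ℤ =>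
      T k * (cc j * T (-j) * qb n (k - j) * qb n (k - 1 + j))).Finite :=
    fin_const_mul _ (fin_right n (fun j => cc j * T (-j) * qb n (k - j)) (k-1))
  have ht3 : (Function.support fun j : ℤ =>
      (cc j * T (k + j) * qb n (k - 1 - j)) * qb n (k + j)).Finite :=
    fin_right n (fun j => cc j * T (k + j) * qb n (k - 1 - j)) k
  have ht4 : (Function.support fun j : ℤ =>
      cc j * qb n (k - 1 - j) * qb n (k - 1 + j)).Finite :=
    fin_right n (fun j => cc j * qb n (k - 1 - j)) (k-1)
  rw [f_eq (n+1) k, finsum_congr step,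
    finsum_add_distrib ht1 (fin_add ht2 (fin_add ht3 ht4)),
    finsum_add_distrib ht2 (fin_add ht3 ht4),
    finsum_add_distrib ht3 ht4]
  have s1 : ∑ᶠ j : ℤ, T (2*k) * (cc j * qb n (k - j) * qb n (k + j)) = T (2*k) * f n k := by
    rw [f_eq n k]
    exact (mul_finsum' _ _ (fin_right n (fun j => cc j * qb n (k - j)) k)).symm
  have s2 : ∑ᶠ j : ℤ, T k * (cc j * T (-j) * qb n (k - j) * qb n (k - 1 + j)) = 0 := by
    rw [← mul_finsum' _ _ (fin_right n (fun j => cc j * T (-j) * qb n (k - j)) (k-1)),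
      Sneg n k, mul_zero]
  have s3 : ∑ᶠ j : ℤ, (cc j * T (k + j) * qb n (k - 1 - j)) * qb n (k + j) = T k * Sf n k := by
    rw [reindex_neg]
    have : ∀ j : ℤ, (cc (-j) * T (k + -j) * qb n (k - 1 - -j)) * qb n (k + -j)
        = T k * (cc j * qb n (k - j) * qb n (k - 1 + j)) := by
      intro j
      rw [cc_neg, show qb n (k - 1 - -j) = qb n (k-1+j) from qbc n (by ring),
        show qb n (k + -j) = qb n (k-j) from qbc n (by ring)]
      have e : (T j : L) * T (k + -j) = T k := T_mul _ _ _ (by ring)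
      linear_combination (cc j * qb n (k-1+j) * qb n (k-j)) * e
    rw [finsum_congr this, Sf,
      ← mul_finsum' _ _ (fin_right n (fun j => cc j * qb n (k - j)) (k-1))]
  have s4 : ∑ᶠ j : ℤ, cc j * qb n (k - 1 - j) * qb n (k - 1 + j) = f n (k-1) :=
    (f_eq n (k-1)).symm
  rw [s1, s2, s3, s4]
  ring
lemma expand2 (n : ℕ) (k : ℤ) :
    f (n+1) k = T k * f n k + Sf n k + T ((n:ℤ)+1-k) * f n (k-1) := by
  have step : ∀ j : ℤ, cc j * qb (n+1) (k - j) * qb (n+1) (k + j)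
      = (cc j * T (k + j) * qb n (k - j)) * qb n (k + j)
      + (cc j * qb n (k - j) * qb n (k - 1 + j)
      + ((cc j * (T ((n:ℤ)+1-k+j) * T (k + j)) * qb n (k - 1 - j)) * qb n (k + j)
      + (cc j * T ((n:ℤ)+1-k+j) * qb n (k - 1 - j)) * qb n (k - 1 + j))) := by
    intro j
    rw [pascal2 n (k-j), qb_succ n (k+j),
      show qb n (k+j-1) = qb n (k-1+j) from qbc n (by ring),
      show qb n (k-j-1) = qb n (k-1-j) from qbc n (by ring),
      Tc (show (n:ℤ)+1-(k-j) = (n:ℤ)+1-k+j by ring)]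
    ring
  have ht1 : (Function.support fun j : ℤ =>
      (cc j * T (k + j) * qb n (k - j)) * qb n (k + j)).Finite :=
    fin_right n (fun j => cc j * T (k + j) * qb n (k - j)) k
  have ht2 : (Function.support fun j : ℤ =>
      cc j * qb n (k - j) * qb n (k - 1 + j)).Finite :=
    fin_right n (fun j => cc j * qb n (k - j)) (k-1)
  have ht3 : (Function.support fun j : ℤ =>
      (cc j * (T ((n:ℤ)+1-k+j) * T (k + j)) * qb n (k - 1 - j)) * qb n (k + j)).Finite :=
    fin_right n _ k
  have ht4 : (Function.support fun j : ℤ =>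
      (cc j * T ((n:ℤ)+1-k+j) * qb n (k - 1 - j)) * qb n (k - 1 + j)).Finite :=
    fin_right n _ (k-1)
  rw [f_eq (n+1) k, finsum_congr step,
    finsum_add_distrib ht1 (fin_add ht2 (fin_add ht3 ht4)),
    finsum_add_distrib ht2 (fin_add ht3 ht4),
    finsum_add_distrib ht3 ht4]
  have s1 : ∑ᶠ j : ℤ, (cc j * T (k + j) * qb n (k - j)) * qb n (k + j) = T k * f n k := by
    rw [reindex_neg]
    have : ∀ j : ℤ, (cc (-j) * T (k + -j) * qb n (k - -j)) * qb n (k + -j)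
        = T k * (cc j * qb n (k - j) * qb n (k + j)) := by
      intro j
      rw [cc_neg, show qb n (k - -j) = qb n (k+j) from qbc n (by ring),
        show qb n (k + -j) = qb n (k-j) from qbc n (by ring)]
      have e : (T j : L) * T (k + -j) = T k := T_mul _ _ _ (by ring)
      linear_combination (cc j * qb n (k+j) * qb n (k-j)) * e
    rw [finsum_congr this, f_eq n k,
      ← mul_finsum' _ _ (fin_right n (fun j => cc j * qb n (k - j)) k)]
  have s2 : ∑ᶠ j : ℤ, cc j * qb n (k - j) * qb n (k - 1 + j) = Sf n k := rfl
  have s3 : ∑ᶠ j : ℤ,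
      (cc j * (T ((n:ℤ)+1-k+j) * T (k + j)) * qb n (k - 1 - j)) * qb n (k + j) = 0 := by
    rw [reindex_neg]
    have : ∀ j : ℤ, (cc (-j) * (T ((n:ℤ)+1-k+ -j) * T (k + -j)) * qb n (k - 1 - -j)) * qb n (k + -j)
        = T ((n:ℤ)+1) * (cc j * T (-j) * qb n (k - j) * qb n (k - 1 + j)) := by
      intro j
      rw [cc_neg, show qb n (k - 1 - -j) = qb n (k-1+j) from qbc n (by ring),
        show qb n (k + -j) = qb n (k-j) from qbc n (by ring)]
      have f1 : (T ((n:ℤ)+1-k+ -j) : L) * T (k + -j) = T ((n:ℤ)+1-2*j) := T_mul _ _ _ (by ring)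
      have f2 : (T j : L) * T ((n:ℤ)+1-2*j) = T ((n:ℤ)+1-j) := T_mul _ _ _ (by ring)
      have f3 : (T ((n:ℤ)+1) : L) * T (-j) = T ((n:ℤ)+1-j) := T_mul _ _ _ (by ring)
      linear_combination (cc j * qb n (k-1+j) * qb n (k-j) * T j) * f1
        + (cc j * qb n (k-1+j) * qb n (k-j)) * f2
        - (cc j * qb n (k-1+j) * qb n (k-j)) * f3
    rw [finsum_congr this,
      ← mul_finsum' _ _ (fin_right n (fun j => cc j * T (-j) * qb n (k - j)) (k-1)),
      Sneg n k, mul_zero]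
  have s4 : ∑ᶠ j : ℤ, (cc j * T ((n:ℤ)+1-k+j) * qb n (k - 1 - j)) * qb n (k - 1 + j)
      = T ((n:ℤ)+1-k) * f n (k-1) := by
    rw [reindex_neg]
    have : ∀ j : ℤ, (cc (-j) * T ((n:ℤ)+1-k+ -j) * qb n (k - 1 - -j)) * qb n (k - 1 + -j)
        = T ((n:ℤ)+1-k) * (cc j * qb n (k - 1 - j) * qb n (k - 1 + j)) := by
      intro j
      rw [cc_neg, show qb n (k - 1 - -j) = qb n (k-1+j) from qbc n (by ring),
        show qb n (k - 1 + -j) = qb n (k-1-j) from qbc n (by ring)]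
      have e : (T j : L) * T ((n:ℤ)+1-k+ -j) = T ((n:ℤ)+1-k) := T_mul _ _ _ (by ring)
      linear_combination (cc j * qb n (k-1+j) * qb n (k-1-j)) * e
    rw [finsum_congr this, f_eq n (k-1),
      ← mul_finsum' _ _ (fin_right n (fun j => cc j * qb n (k - 1 - j)) (k-1))]
  rw [s1, s2, s3, s4]
  ring

lemma expand3 (n : ℕ) (k : ℤ) :
    f (n+1) k = f n k + T ((n:ℤ)+1-k) * Sf n k + T (2*((n:ℤ)+1-k)) * f n (k-1) := by
  have step : ∀ j : ℤ, cc j * qb (n+1) (k - j) * qb (n+1) (k + j)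
      = cc j * qb n (k - j) * qb n (k + j)
      + (T ((n:ℤ)+1-k) * (cc j * T (-j) * qb n (k - j) * qb n (k - 1 + j))
      + ((cc j * T ((n:ℤ)+1-k+j) * qb n (k - 1 - j)) * qb n (k + j)
      + T (2*((n:ℤ)+1-k)) * (cc j * qb n (k - 1 - j) * qb n (k - 1 + j)))) := by
    intro j
    rw [pascal2 n (k-j), pascal2 n (k+j),
      show qb n (k+j-1) = qb n (k-1+j) from qbc n (by ring),
      show qb n (k-j-1) = qb n (k-1-j) from qbc n (by ring),
      Tc (show (n:ℤ)+1-(k-j) = (n:ℤ)+1-k+j by ring),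
      Tc (show (n:ℤ)+1-(k+j) = (n:ℤ)+1-k-j by ring)]
    have g1 : (T ((n:ℤ)+1-k) : L) * T (-j) = T ((n:ℤ)+1-k-j) := T_mul _ _ _ (by ring)
    have g2 : (T ((n:ℤ)+1-k+j) : L) * T ((n:ℤ)+1-k-j) = T (2*((n:ℤ)+1-k)) := T_mul _ _ _ (by ring)
    linear_combination (-(cc j * qb n (k-j) * qb n (k-1+j))) * g1
      + (cc j * qb n (k-1-j) * qb n (k-1+j)) * g2
  have ht1 : (Function.support fun j : ℤ =>
      cc j * qb n (k - j) * qb n (k + j)).Finite :=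
    fin_right n (fun j => cc j * qb n (k - j)) k
  have ht2 : (Function.support fun j : ℤ =>
      T ((n:ℤ)+1-k) * (cc j * T (-j) * qb n (k - j) * qb n (k - 1 + j))).Finite :=
    fin_const_mul _ (fin_right n (fun j => cc j * T (-j) * qb n (k - j)) (k-1))
  have ht3 : (Function.support fun j : ℤ =>
      (cc j * T ((n:ℤ)+1-k+j) * qb n (k - 1 - j)) * qb n (k + j)).Finite :=
    fin_right n _ k
  have ht4 : (Function.support fun j : ℤ =>
      T (2*((n:ℤ)+1-k)) * (cc j * qb n (k - 1 - j) * qb n (k - 1 + j))).Finite :=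
    fin_const_mul _ (fin_right n (fun j => cc j * qb n (k - 1 - j)) (k-1))
  rw [f_eq (n+1) k, finsum_congr step,
    finsum_add_distrib ht1 (fin_add ht2 (fin_add ht3 ht4)),
    finsum_add_distrib ht2 (fin_add ht3 ht4),
    finsum_add_distrib ht3 ht4]
  have s1 : ∑ᶠ j : ℤ, cc j * qb n (k - j) * qb n (k + j) = f n k := (f_eq n k).symm
  have s2 : ∑ᶠ j : ℤ, T ((n:ℤ)+1-k) * (cc j * T (-j) * qb n (k - j) * qb n (k - 1 + j)) = 0 := by
    rw [← mul_finsum' _ _ (fin_right n (fun j => cc j * T (-j) * qb n (k - j)) (k-1)),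
      Sneg n k, mul_zero]
  have s3 : ∑ᶠ j : ℤ, (cc j * T ((n:ℤ)+1-k+j) * qb n (k - 1 - j)) * qb n (k + j)
      = T ((n:ℤ)+1-k) * Sf n k := by
    rw [reindex_neg]
    have : ∀ j : ℤ, (cc (-j) * T ((n:ℤ)+1-k+ -j) * qb n (k - 1 - -j)) * qb n (k + -j)
        = T ((n:ℤ)+1-k) * (cc j * qb n (k - j) * qb n (k - 1 + j)) := by
      intro j
      rw [cc_neg, show qb n (k - 1 - -j) = qb n (k-1+j) from qbc n (by ring),
        show qb n (k + -j) = qb n (k-j) from qbc n (by ring)]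
      have e : (T j : L) * T ((n:ℤ)+1-k+ -j) = T ((n:ℤ)+1-k) := T_mul _ _ _ (by ring)
      linear_combination (cc j * qb n (k-1+j) * qb n (k-j)) * e
    rw [finsum_congr this, Sf,
      ← mul_finsum' _ _ (fin_right n (fun j => cc j * qb n (k - j)) (k-1))]
  have s4 : ∑ᶠ j : ℤ, T (2*((n:ℤ)+1-k)) * (cc j * qb n (k - 1 - j) * qb n (k - 1 + j))
      = T (2*((n:ℤ)+1-k)) * f n (k-1) := by
    rw [f_eq n (k-1),
      ← mul_finsum' _ _ (fin_right n (fun j => cc j * qb n (k - 1 - j)) (k-1))]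
  rw [s1, s2, s3, s4]
  ring
lemma R1 (n : ℕ) (k : ℤ) :
    (1 - T k) * f (n+1) k = (1 - T ((n:ℤ)+1)) * f n (k-1) := by
  have h1 := expand1 n k
  have h2 := expand2 n k
  have e1 : (T k : L) * T k = T (2*k) := T_mul _ _ _ (by ring)
  have e2 : (T k : L) * T ((n:ℤ)+1-k) = T ((n:ℤ)+1) := T_mul _ _ _ (by ring)
  linear_combination h1 - (T k : L) * h2 - (f n k) * e1 - (f n (k-1)) * e2

lemma R2 (n : ℕ) (k : ℤ) :
    (1 - T ((n:ℤ)+1-k)) * f (n+1) k = (1 - T ((n:ℤ)+1)) * f n k := by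
  have h3 := expand3 n k
  have h2 := expand2 n k
  have e2 : (T k : L) * T ((n:ℤ)+1-k) = T ((n:ℤ)+1) := T_mul _ _ _ (by ring)
  have e3 : (T ((n:ℤ)+1-k) : L) * T ((n:ℤ)+1-k) = T (2*((n:ℤ)+1-k)) := T_mul _ _ _ (by ring)
  linear_combination h3 - (T ((n:ℤ)+1-k) : L) * h2 - (f n (k-1)) * e3 - (f n k) * e2

lemma qbR1 (n : ℕ) (k : ℤ) :
    (1 - T k) * qb (n+1) k = (1 - T ((n:ℤ)+1)) * qb n (k-1) := by
  have h1 := qb_succ n k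
  have h2 := pascal2 n k
  have e2 : (T k : L) * T ((n:ℤ)+1-k) = T ((n:ℤ)+1) := T_mul _ _ _ (by ring)
  linear_combination h1 - (T k : L) * h2 - qb n (k-1) * e2

lemma qb_col0 (n : ℕ) : qb (n+1) 0 = qb n 0 := by
  rw [qb_succ, T_zero, one_mul, qb_neg n (0-1) (by norm_num), add_zero]

lemma T_ne_one {a : ℤ} (h : a ≠ 0) : (T a : L) ≠ 1 := by
  intro hT
  rw [← T_zero] at hT
  have h0 := congrArg (fun y : L => y.coeff 0) hT
  simp only [T_apply, if_neg h, if_pos rfl] at h0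
  exact one_ne_zero h0.symm

lemma one_sub_T_ne {a : ℤ} (h : a ≠ 0) : (1 - T a : L) ≠ 0 :=
  sub_ne_zero.mpr (Ne.symm (T_ne_one h))

lemma f_eq_qb : ∀ (n : ℕ) (k : ℤ), f n k = qb n k := by
  intro n
  induction n with
  | zero =>
    intro k
    rw [f_eq]
    by_cases hk : k = 0
    · subst hk
      rw [finsum_eq_single _ (0:ℤ) ?_]
      · simp [cc, qb_zero]
      · intro x hx
        rw [show (0:ℤ) + x = x by ring, qb_zero x, if_neg hx, mul_zero]
    · rw [finsum_eq_zero_of_forall_eq_zero ?_, qb_zero, if_neg hk]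
      intro j
      by_cases hj : j = k
      · rw [qb_zero (k+j), if_neg (by omega), mul_zero]
      · rw [qb_zero (k-j), if_neg (by omega), mul_zero, zero_mul]
  | succ n ih =>
    intro k
    by_cases hk : k = 0
    · subst hk
      have h := R2 n 0
      rw [ih 0, Tc (show (n:ℤ)+1-0 = (n:ℤ)+1 by ring)] at h
      rw [qb_col0]
      exact mul_left_cancel₀ (one_sub_T_ne (by positivity)) h
    · have h := R1 n k
      rw [ih (k-1)] at h
      exact mul_left_cancel₀ (one_sub_T_ne hk) (h.trans (qbR1 n k).symm)
theorem stmt7 (n : ℕ) (hn : 2 ≤ n) (k : ℤ) :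
    f n k - (1 + q - q ^ n) * f (n - 1) k
      - T (2 * (n : ℤ) - 2 * k) * f (n - 1) (k - 1)
      + q * (1 - q ^ (n - 1)) * f (n - 2) k = 0 := by
  obtain ⟨m, rfl⟩ : ∃ m, n = m + 2 := ⟨n - 2, by omega⟩
  have goal' : qb (m+2) k - (1 + q - q ^ (m+2)) * qb (m+1) k
      - T (2 * ((m+2 : ℕ) : ℤ) - 2 * k) * qb (m+1) (k-1)
      + q * (1 - q ^ (m+1)) * qb m k = 0 := by
    have hx : (T k : L) * T (-k) = 1 := T_mul_one _ _ (by ring)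
    have hq : q * T (-1) = 1 := by
      show (T 1 : L) * T (-1) = 1
      exact T_mul_one _ _ (by ring)
    have hQ : q ^ (m+2) = (T ((m:ℤ)+2) : L) := by
      show (T 1 : L) ^ (m+2) = T ((m:ℤ)+2)
      rw [T_pow]; exact Tc (by push_cast; ring)
    have hQ' : q ^ (m+1) = (T ((m:ℤ)+2) : L) * T (-1) := by
      show (T 1 : L) ^ (m+1) = T ((m:ℤ)+2) * T (-1)
      rw [T_pow, ← T_add]; exact Tc (by push_cast; ring)
    have hT2 : (T (2 * ((m+2 : ℕ) : ℤ) - 2 * k) : L)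
        = T ((m:ℤ)+2) * T ((m:ℤ)+2) * T (-k) * T (-k) := by
      rw [← T_add, ← T_add, ← T_add]; exact Tc (by push_cast; ring)
    have h1 : qb (m+2) k = T k * qb (m+1) k + qb (m+1) (k-1) := qb_succ (m+1) k
    have h2 : qb (m+1) k = T k * qb m k + qb m (k-1) := qb_succ m k
    have h3 : qb (m+1) (k-1) = T k * T (-1) * qb m (k-1) + qb m (k-1-1) := by
      have h := qb_succ m (k-1)
      rw [show (T (k-1) : L) = T k * T (-1) from by rw [← T_add]; exact Tc (by ring)] at h
      exact h
    have h4 : qb (m+1) k = qb m k + T ((m:ℤ)+2) * T (-1) * T (-k) * qb m (k-1) := by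
      have h := pascal2 m k
      rw [show (T ((m:ℤ)+1-k) : L) = T ((m:ℤ)+2) * T (-1) * T (-k) from by
        rw [← T_add, ← T_add]; exact Tc (by ring)] at h
      exact h
    have h5 : qb (m+1) (k-1) = qb m (k-1) + T ((m:ℤ)+2) * T (-k) * qb m (k-1-1) := by
      have h := pascal2 m (k-1)
      rw [show (T ((m:ℤ)+1-(k-1)) : L) = T ((m:ℤ)+2) * T (-k) from by
        rw [← T_add]; exact Tc (by ring)] at h
      exact h
    linear_combination h1 + (T k - 1 - q + T ((m:ℤ)+2)) * h2
      + (1 - T ((m:ℤ)+2) * T ((m:ℤ)+2) * T (-k) * T (-k)) * h3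
      + (T k - q + T ((m:ℤ)+2)) * (h4 - h2)
      + (1 + T ((m:ℤ)+2) * T (-k)) * (h5 - h3)
      - T ((m:ℤ)+2) * T ((m:ℤ)+2) * T (-1) * T (-k) * (qb m (k-1)) * hx
      - T ((m:ℤ)+2) * T (-k) * (qb m (k-1)) * hq
      + (qb (m+1) k) * hQ
      - (qb (m+1) (k-1)) * hT2
      - q * (qb m k) * hQ'
      - T ((m:ℤ)+2) * (qb m k) * hq
  rw [f_eq_qb, f_eq_qb, f_eq_qb, f_eq_qb]
  exact goal'
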